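/- arXiv:math/0206296 — 4 statements merged into one kernel-verified Lean document; each statement's English description precedes it below -/
import Mathlib

section
/- Let (A,B) be an ordered partition of [n] with |A| = r, let σ be the cyclic permutation (1 2 ... n), and let x(A,B) = |{(a,b) ∈ A × B : a < b}|. Then x(σ(A), σ(B)) ≡ x(A,B) − r (mod n). Specifically, if n ∈ B then x(σ(A),σ(B)) = x(A,B) − r, and if n ∈ A then x(σ(A),σ(B)) = x(A,B) + (n − r). -/
open Finset

noncomputable def xAB {n : ℕ} (A B : Finset (Fin n)) : ℕ :=
  Set.ncard {p : Fin n × Fin n | p.1 ∈ A ∧ p.2 ∈ B ∧ p.1 < p.2}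

def cyc {n : ℕ} [NeZero n] : Fin n → Fin n := fun i => i + 1

lemma xAB_eq {n : ℕ} (A B : Finset (Fin n)) :
    xAB A B = ((A ×ˢ B).filter fun p => p.1 < p.2).card := by
  rw [xAB, show {p : Fin n × Fin n | p.1 ∈ A ∧ p.2 ∈ B ∧ p.1 < p.2}
      = ↑((A ×ˢ B).filter fun p => p.1 < p.2) by
    ext p; simp [Finset.mem_filter, Finset.mem_product, and_assoc]]
  exact Set.ncard_coe_finset _

lemma succ_lt_succ_iff {m : ℕ} (a b : Fin (m+1)) :
    a + 1 < b + 1 ↔ (a = Fin.last m ∧ b ≠ Fin.last m) ∨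
      (a ≠ Fin.last m ∧ b ≠ Fin.last m ∧ a < b) := by
  have ha := Fin.val_add_one a
  have hb := Fin.val_add_one b
  have ha2 : a = Fin.last m ↔ a.val = m := by rw [Fin.ext_iff, Fin.val_last]
  have hb2 : b = Fin.last m ↔ b.val = m := by rw [Fin.ext_iff, Fin.val_last]
  have ha3 := a.is_le
  have hb3 := b.is_le
  simp only [Fin.lt_def, ha, hb, ne_eq, ha2, hb2]
  split_ifs <;> omega

lemma xAB_image {m : ℕ} (A B : Finset (Fin (m+1))) :
    xAB (A.image cyc) (B.image cyc)
      = ((A ×ˢ B).filter fun p => p.1 + 1 < p.2 + 1).card := by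
  rw [xAB_eq]
  have : (A.image cyc) ×ˢ (B.image cyc) = (A ×ˢ B).image (Prod.map cyc cyc) := by
    ext ⟨p1, p2⟩
    simp only [mem_product, mem_image, Prod.exists, Prod.map, Prod.mk.injEq]
    constructor
    · rintro ⟨⟨a, ha, rfl⟩, ⟨b, hb, hb'⟩⟩
      exact ⟨a, b, ⟨ha, hb⟩, by simp_all⟩
    · rintro ⟨a, b, ⟨ha, hb⟩, rfl, rfl⟩
      exact ⟨⟨a, ha, rfl⟩, ⟨b, hb, rfl⟩⟩
  have hinj : Function.Injective (Prod.map (cyc (n := m+1)) cyc) :=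
    Function.Injective.prodMap (add_left_injective (1 : Fin (m+1))) (add_left_injective (1 : Fin (m+1)))
  rw [this, Finset.filter_image, Finset.card_image_of_injective _ hinj]
  congr 1

/-- Let `(A, B)` be an ordered partition of `[n]` with `|A| = r` and `σ` the cyclic
permutation `(1 2 ⋯ n)`.  Then `x(σA, σB) ≡ x(A,B) - r (mod n)`; specifically, if the
top element `n` lies in `B` then `x(σA, σB) = x(A,B) - r`, and if it lies in `A` then
`x(σA, σB) = x(A,B) + (n - r)`.  (Here `-1 : Fin n` is the top element `n` of `[n]`.) -/
theorem x_cyclic_shift (n : ℕ) [NeZero n] (A B : Finset (Fin n))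
    (hdisj : Disjoint A B) (hunion : A ∪ B = univ) (r : ℕ) (hr : A.card = r) :
    ((xAB (A.image cyc) (B.image cyc) : ZMod n) = (xAB A B : ZMod n) - (r : ZMod n)) ∧
    ((-1 : Fin n) ∈ B → xAB (A.image cyc) (B.image cyc) + r = xAB A B) ∧
    ((-1 : Fin n) ∈ A → xAB (A.image cyc) (B.image cyc) = xAB A B + (n - r)) := by
  obtain ⟨m, rfl⟩ := Nat.exists_eq_succ_of_ne_zero (NeZero.ne n)
  set t : Fin (m+1) := Fin.last m with htdef
  have htop : (-1 : Fin (m+1)) = t := by ext; simp [htdef, Fin.val_last]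
  have hcardB : r + B.card = m + 1 := by
    rw [← hr, ← Finset.card_union_of_disjoint hdisj, hunion, card_univ, Fintype.card_fin]
  have hx' := xAB_image A B
  have hx := xAB_eq A B
  -- key counting facts
  have key1 : t ∈ B → ((A ×ˢ B).filter fun p => p.1 + 1 < p.2 + 1).card + r
      = ((A ×ˢ B).filter fun p => p.1 < p.2).card := by
    intro htB
    have htA : t ∉ A := fun h => (Finset.disjoint_left.mp hdisj h) htB
    have hsplit : ((A ×ˢ B).filter fun p => p.1 < p.2)
        = (A ×ˢ B).filter fun p => (p.1 + 1 < p.2 + 1) ∨ p.2 = t := by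
      apply Finset.filter_congr
      intro p hp
      rw [mem_product] at hp
      have h1 : p.1 ≠ t := fun h => htA (h ▸ hp.1)
      rw [succ_lt_succ_iff]
      constructor
      · intro h
        by_cases h2 : p.2 = t
        · exact Or.inr h2
        · exact Or.inl (Or.inr ⟨h1, h2, h⟩)
      · rintro (((⟨h2, _⟩ | ⟨_, _, h2⟩)) | h2)
        · exact absurd h2 h1
        · exact h2
        · exact h2 ▸ lt_of_le_of_ne (Fin.le_last p.1) h1
    rw [hsplit, Finset.filter_or, Finset.card_union_of_disjoint]
    · congr 1
      have : ((A ×ˢ B).filter fun p => p.2 = t) = A ×ˢ {t} := by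
        ext p
        simp only [mem_filter, mem_product, mem_singleton]
        constructor
        · rintro ⟨⟨h1, _⟩, h3⟩; exact ⟨h1, h3⟩
        · rintro ⟨h1, h2⟩; exact ⟨⟨h1, h2 ▸ htB⟩, h2⟩
      rw [this, card_product, card_singleton, mul_one, hr]
    · rw [Finset.disjoint_left]
      intro p hp hq
      rw [mem_filter] at hp hq
      rw [succ_lt_succ_iff] at hp
      rcases hp.2 with ⟨_, h⟩ | ⟨_, h, _⟩ <;> exact h hq.2
  have key2 : t ∈ A → ((A ×ˢ B).filter fun p => p.1 + 1 < p.2 + 1).card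
      = ((A ×ˢ B).filter fun p => p.1 < p.2).card + B.card := by
    intro htA
    have htB : t ∉ B := fun h => (Finset.disjoint_left.mp hdisj htA) h
    have hsplit : ((A ×ˢ B).filter fun p => p.1 + 1 < p.2 + 1)
        = (A ×ˢ B).filter fun p => (p.1 < p.2) ∨ p.1 = t := by
      apply Finset.filter_congr
      intro p hp
      rw [mem_product] at hp
      have h2 : p.2 ≠ t := fun h => htB (h ▸ hp.2)
      rw [succ_lt_succ_iff]
      constructor
      · rintro (⟨h1, _⟩ | ⟨_, _, h1⟩)
        · exact Or.inr h1
        · exact Or.inl h1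
      · rintro (h1 | h1)
        · have : p.1 ≠ t := fun h => by
            have := lt_of_lt_of_le h1 (Fin.le_last p.2)
            rw [h] at this; exact lt_irrefl _ this
          exact Or.inr ⟨this, h2, h1⟩
        · exact Or.inl ⟨h1, h2⟩
    rw [hsplit, Finset.filter_or, Finset.card_union_of_disjoint]
    · congr 1
      have : ((A ×ˢ B).filter fun p => p.1 = t) = {t} ×ˢ B := by
        ext p
        simp only [mem_filter, mem_product, mem_singleton]
        constructor
        · rintro ⟨⟨_, h1⟩, h3⟩; exact ⟨h3, h1⟩
        · rintro ⟨h1, h2⟩; exact ⟨⟨h1 ▸ htA, h2⟩, h1⟩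
      rw [this, card_product, card_singleton, one_mul]
    · rw [Finset.disjoint_left]
      intro p hp hq
      rw [mem_filter] at hp hq
      have := lt_of_lt_of_le hp.2 (Fin.le_last p.2)
      rw [hq.2] at this; exact lt_irrefl _ this
  have ht : t ∈ A ∨ t ∈ B := by
    have := Finset.mem_univ t
    rw [← hunion, Finset.mem_union] at this
    exact this
  rw [htop]
  rcases ht with htA | htB
  · have h2 := key2 htA
    have htB : t ∉ B := fun h => (Finset.disjoint_left.mp hdisj htA) h
    have hB : B.card = (m + 1) - r := by omega
    have hrle : r ≤ m + 1 := by omega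
    refine ⟨?_, fun h => absurd h htB, fun _ => by rw [hx', hx, h2, hB]⟩
    rw [hx', hx, h2, hB]
    push_cast [Nat.cast_sub hrle]
    rw [show ((m : ZMod (m+1)) + 1) = ((m+1 : ℕ) : ZMod (m+1)) by push_cast; ring,
      ZMod.natCast_self]
    ring
  · have h1 := key1 htB
    have htA : t ∉ A := fun h => (Finset.disjoint_left.mp hdisj h) htB
    refine ⟨?_, fun _ => by rw [hx', hx]; exact h1, fun h => absurd h htA⟩
    rw [hx', hx]
    have : ((((A ×ˢ B).filter fun p => p.1 + 1 < p.2 + 1).card : ZMod (m+1)) + r)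
        = (((A ×ˢ B).filter fun p => p.1 < p.2).card : ZMod (m+1)) := by
      exact_mod_cast congrArg (Nat.cast : ℕ → ZMod (m+1)) h1
    linear_combination this
end

section
/- For any set partition P of [mn] that belongs to 𝒫_n^0[mn] (every block is a union of the consecutive intervals J_k = {kn+1,...,(k+1)n}), the reduced crossing number satisfies c_0(P) ≡ 0 (mod n). -/
open Finset

/-- The reduced crossing number of a set partition of `Fin N`. -/
noncomputable def c0 {N : ℕ} (P : Finpartition (univ : Finset (Fin N))) : ℕ :=
  Set.ncard {t : Fin N × Fin N × Fin N × Fin N |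
    t.1 < t.2.1 ∧ t.2.1 < t.2.2.1 ∧ t.2.2.1 < t.2.2.2 ∧
    ∃ A ∈ P.parts, ∃ B ∈ P.parts, A ≠ B ∧
      t.1 ∈ A ∧ t.2.2.1 ∈ A ∧ t.2.1 ∈ B ∧ t.2.2.2 ∈ B ∧
      (∀ x ∈ A, t.1 ≤ x) ∧ (∀ x ∈ B, t.2.1 ≤ x)}

/-- The interval `J_k = {kn+1, …, (k+1)n}` inside `[mn]`, realized in `Fin (m*n)`. -/
def Jset (m n k : ℕ) : Finset (Fin (m * n)) := univ.filter fun x => x.val / n = k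

lemma card_Jset {m n k : ℕ} (hn : 0 < n) (hk : k < m) : (Jset m n k).card = n := by
  have himg : Jset m n k = (Finset.range n).attach.image
      (fun i => (⟨k * n + i.1, by
        have hi := i.2
        rw [Finset.mem_range] at hi
        calc k * n + i.1 < k * n + n := by omega
          _ = (k + 1) * n := by ring
          _ ≤ m * n := Nat.mul_le_mul_right _ hk⟩ : Fin (m * n))) := by
    ext x
    simp only [Jset, mem_filter, mem_univ, true_and, mem_image, mem_attach, true_and,
      Subtype.exists, mem_range]
    constructor
    · intro hx
      refine ⟨x.val % n, Nat.mod_lt _ hn, ?_⟩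
      apply Fin.ext
      simp only
      conv_rhs => rw [← Nat.div_add_mod x.val n]
      rw [hx, Nat.mul_comm]
    · rintro ⟨i, hi, rfl⟩
      simp only
      rw [Nat.add_comm, Nat.add_mul_div_right _ _ hn, Nat.div_eq_of_lt hi]
      omega
  rw [himg, Finset.card_image_of_injective _ ?_, Finset.card_attach, Finset.card_range]
  intro a b hab
  have := Fin.val_eq_of_eq hab
  simp only at this
  exact Subtype.ext (by omega)

lemma key_dvd {m n : ℕ} (hn : 0 < n) (P : Finpartition (univ : Finset (Fin (m * n))))
    (h : ∀ k < m, ∀ A ∈ P.parts, Jset m n k ⊆ A ∨ Disjoint (Jset m n k) A)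
    (A B : Finset (Fin (m * n))) (hA : A ∈ P.parts) (hB : B ∈ P.parts) (hAB : A ≠ B)
    (a2 : Fin (m * n)) (ha2 : a2 ∈ A) :
    n ∣ (B.filter fun b2 => a2 < b2).card := by
  classical
  have hdivlt : ∀ x : Fin (m * n), x.val / n < m := fun x =>
    Nat.div_lt_of_lt_mul (by rw [Nat.mul_comm n m]; exact x.isLt)
  -- a2's interval is inside A
  have hJA : Jset m n (a2.val / n) ⊆ A := by
    rcases h (a2.val / n) (hdivlt a2) A hA with h1 | h2
    · exact h1
    · exfalso
      exact (Finset.disjoint_left.mp h2 (by simp [Jset])) ha2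
  -- rewrite filter condition in terms of interval indices
  have hfe : (B.filter fun b2 => a2 < b2) = B.filter fun b2 => a2.val / n < b2.val / n := by
    ext b2
    simp only [mem_filter, and_congr_right_iff]
    intro hb2
    constructor
    · intro hlt
      rcases Nat.lt_trichotomy (a2.val / n) (b2.val / n) with h1 | h1 | h1
      · exact h1
      · exfalso
        have hb2J : b2 ∈ Jset m n (a2.val / n) := by simp [Jset, h1]
        exact hAB (P.eq_of_mem_parts hA hB (hJA hb2J) hb2)
      · exact absurd (Nat.lt_of_div_lt_div h1) (by omega)
    · intro h1
      exact Nat.lt_of_div_lt_div h1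
  rw [hfe]
  rw [Finset.card_eq_sum_card_fiberwise (f := fun x : Fin (m * n) => x.val / n)
    (t := Finset.range m) (fun x _ => Finset.mem_range.mpr (hdivlt x))]
  apply Finset.dvd_sum
  intro k hk
  rw [Finset.mem_range] at hk
  rcases h k hk B hB with h1 | h2
  · by_cases hka : a2.val / n < k
    · have : ((B.filter fun b2 => a2.val / n < b2.val / n).filter
          fun x => x.val / n = k) = Jset m n k := by
        ext x
        simp only [mem_filter, Jset, mem_univ, true_and]
        constructor
        · rintro ⟨⟨-, -⟩, hx⟩; exact hx
        · intro hx
          exact ⟨⟨h1 (by simp [Jset, hx]), by omega⟩, hx⟩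
      rw [this, card_Jset hn hk]
    · have : ((B.filter fun b2 => a2.val / n < b2.val / n).filter
          fun x => x.val / n = k) = ∅ := by
        ext x
        simp only [mem_filter, Finset.notMem_empty, iff_false]
        rintro ⟨⟨-, hlt⟩, hx⟩
        omega
      rw [this, Finset.card_empty]
      exact dvd_zero n
  · have : ((B.filter fun b2 => a2.val / n < b2.val / n).filter
        fun x => x.val / n = k) = ∅ := by
      ext x
      simp only [mem_filter, Finset.notMem_empty, iff_false]
      rintro ⟨⟨hxB, -⟩, hx⟩
      exact (Finset.disjoint_left.mp h2 (by simp [Jset, hx])) hxB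
    rw [this, Finset.card_empty]
    exact dvd_zero n

/-- If `P ∈ 𝒫_n⁰[mn]`, i.e. every block of `P` is a union of the consecutive intervals
`J_k`, then `c₀(P) ≡ 0 (mod n)`. -/
theorem n_dvd_c0_of_interval_partition (m n : ℕ)
    (P : Finpartition (univ : Finset (Fin (m * n))))
    (h : ∀ k < m, ∀ A ∈ P.parts, Jset m n k ⊆ A ∨ Disjoint (Jset m n k) A) :
    n ∣ c0 P := by
  classical
  set p : Fin (m*n) × Fin (m*n) × Fin (m*n) × Fin (m*n) → Prop := fun t =>
    t.1 < t.2.1 ∧ t.2.1 < t.2.2.1 ∧ t.2.2.1 < t.2.2.2 ∧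
    ∃ A ∈ P.parts, ∃ B ∈ P.parts, A ≠ B ∧
      t.1 ∈ A ∧ t.2.2.1 ∈ A ∧ t.2.1 ∈ B ∧ t.2.2.2 ∈ B ∧
      (∀ x ∈ A, t.1 ≤ x) ∧ (∀ x ∈ B, t.2.1 ≤ x) with hp
  have hc : c0 P = (univ.filter p).card := by
    rw [c0, ← Set.ncard_coe_finset]
    congr 1
    ext t
    simp [hp]
  rw [hc]
  rw [Finset.card_eq_sum_card_fiberwise
    (f := fun t : Fin (m*n) × Fin (m*n) × Fin (m*n) × Fin (m*n) => (t.1, t.2.1, t.2.2.1))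
    (t := (univ : Finset (Fin (m*n) × Fin (m*n) × Fin (m*n)))) (fun x _ => mem_univ _)]
  apply Finset.dvd_sum
  rintro ⟨a1, b1, a2⟩ -
  have hcard : ((univ.filter p).filter
      fun t => (t.1, t.2.1, t.2.2.1) = (a1, b1, a2)).card
      = (univ.filter fun b2 => p (a1, b1, a2, b2)).card := by
    refine Finset.card_bij' (fun t _ => t.2.2.2) (fun b2 _ => (a1, b1, a2, b2)) ?_ ?_ ?_ ?_
    · rintro ⟨x1, x2, x3, x4⟩ ht
      simp only [mem_filter, mem_univ, true_and, Prod.mk.injEq] at ht ⊢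
      obtain ⟨hpt, rfl, rfl, rfl⟩ := ht
      exact hpt
    · intro b2 hb2
      simp only [mem_filter, mem_univ, true_and] at hb2 ⊢
      exact ⟨hb2, trivial⟩
    · rintro ⟨x1, x2, x3, x4⟩ ht
      simp only [mem_filter, Prod.mk.injEq] at ht
      obtain ⟨-, rfl, rfl, rfl⟩ := ht
      rfl
    · intro b2 hb2
      rfl
  rw [hcard]
  rcases Finset.eq_empty_or_nonempty (univ.filter fun b2 => p (a1, b1, a2, b2)) with he | hne
  · rw [he, Finset.card_empty]; exact dvd_zero n
  · obtain ⟨b2₀, hb2₀⟩ := hne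
    rw [Finset.mem_filter] at hb2₀
    obtain ⟨-, h1, h2, h3, A, hA, B, hB, hAB, ha1, ha2, hb1, hb2w, hminA, hminB⟩ := hb2₀
    have hn : 0 < n := by
      rcases Nat.eq_zero_or_pos n with rfl | hn
      · exact absurd a2.isLt (by simp)
      · exact hn
    have hfe : (univ.filter fun b2 => p (a1, b1, a2, b2)) = B.filter fun b2 => a2 < b2 := by
      ext b2
      simp only [mem_filter, mem_univ, true_and]
      constructor
      · rintro ⟨-, -, hlt, A', hA', B', hB', -, ha1', -, hb1', hb2', -, -⟩
        have : B' = B := P.eq_of_mem_parts hB' hB hb1' hb1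
        exact ⟨this ▸ hb2', hlt⟩
      · rintro ⟨hb2B, hlt⟩
        exact ⟨h1, h2, hlt, A, hA, B, hB, hAB, ha1, ha2, hb1, hb2B, hminA, hminB⟩
    rw [hfe]
    exact key_dvd hn P h A B hA hB hAB a2 ha2
end

section
/- Let a and b be elements of a unital complex algebra satisfying ba = q'ab where q' is a primitive n'-th root of unity with n' > 1. Then (a + b)^{n'} = a^{n'} + b^{n'}. -/
noncomputable def qb (q : ℂ) : ℕ → ℕ → ℂ
  | 0, 0 => 1
  | 0, _+1 => 0
  | m+1, 0 => qb q m 0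
  | m+1, k+1 => q ^ (k+1) * qb q m (k+1) + qb q m k

lemma qb_zero (q : ℂ) (m : ℕ) : qb q m 0 = 1 := by
  induction m with
  | zero => rfl
  | succ m ih => simpa [qb] using ih

lemma qb_of_lt (q : ℂ) : ∀ {m k : ℕ}, m < k → qb q m k = 0 := by
  intro m
  induction m with
  | zero => intro k hk; match k, hk with
    | k+1, _ => rfl
  | succ m ih =>
    intro k hk
    match k, hk with
    | k+1, hk =>
      have h1 : m < k := by omega
      have h2 : m < k + 1 := by omega
      simp [qb, ih h1, ih h2]

lemma qb_diag (q : ℂ) (m : ℕ) : qb q m m = 1 := by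
  induction m with
  | zero => rfl
  | succ m ih => simp [qb, ih, qb_of_lt q (Nat.lt_succ_self m)]

lemma qb_LM (q : ℂ) : ∀ n : ℕ,
    (∀ k : ℕ, (1 - q ^ (k+1)) * qb q (n+1) (k+1) = (1 - q ^ (n+1)) * qb q n k) ∧
    (∀ k : ℕ, (1 - q ^ (n+1-k)) * qb q (n+1) k = (1 - q ^ (n+1)) * qb q n k) := by
  intro n
  induction n with
  | zero =>
    constructor
    · intro k
      match k with
      | 0 => simp [qb]
      | k+1 => simp [qb, qb_of_lt q (by omega : (0:ℕ) < k+1), qb_of_lt q (by omega : (0:ℕ) < k+2)]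
    · intro k
      match k with
      | 0 => simp [qb]
      | 1 => simp [qb, qb_of_lt q one_pos]
      | k+2 => simp [qb_of_lt q (by omega : (0:ℕ) < k+2), qb_of_lt q (by omega : (1:ℕ) < k+2)]
  | succ n ih =>
    have K : ∀ k : ℕ, (1 - q ^ (k+1)) * qb q (n+1) (k+1) = (1 - q ^ (n+1-k)) * qb q (n+1) k :=
      fun k => (ih.1 k).trans (ih.2 k).symm
    constructor
    · intro k
      by_cases hk : k ≤ n + 1
      · have hqb : qb q (n+2) (k+1) = q ^ (k+1) * qb q (n+1) (k+1) + qb q (n+1) k := rfl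
        have hpow : q ^ (k+1) * q ^ (n+1-k) = q ^ (n+2) := by
          rw [← pow_add]; congr 1; omega
        rw [hqb, ← hpow]
        linear_combination q ^ (k+1) * K k
      · have h1 : qb q (n+1) k = 0 := qb_of_lt q (by omega)
        have h2 : qb q (n+2) (k+1) = 0 := qb_of_lt q (by omega)
        simp [h1, h2]
    · intro k
      match k with
      | 0 => simp [qb_zero]
      | j+1 =>
        by_cases hj : j ≤ n + 1
        · have hqb : qb q (n+2) (j+1) = q ^ (j+1) * qb q (n+1) (j+1) + qb q (n+1) j := rfl
          have hsub : n + 2 - (j+1) = n + 1 - j := by omega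
          have hpow : q ^ (n+1-j) * q ^ (j+1) = q ^ (n+2) := by
            rw [← pow_add]; congr 1; omega
          rw [hsub, hqb, ← hpow]
          linear_combination (-1 : ℂ) * K j
        · have h1 : qb q (n+1) (j+1) = 0 := qb_of_lt q (by omega)
          have h2 : qb q (n+2) (j+1) = 0 := qb_of_lt q (by omega)
          simp [h1, h2]

lemma qb_vanish (n' : ℕ) (q : ℂ) (hq : q ^ n' = 1)
    (hprim : ∀ k, 0 < k → k < n' → q ^ k ≠ 1) {k : ℕ} (h0 : 0 < k) (h1 : k < n') :
    qb q n' k = 0 := by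
  obtain ⟨m, rfl⟩ : ∃ m, n' = m + 1 := ⟨n' - 1, by omega⟩
  obtain ⟨j, rfl⟩ : ∃ j, k = j + 1 := ⟨k - 1, by omega⟩
  have hL := (qb_LM q m).1 j
  rw [hq, sub_self, zero_mul] at hL
  have hne : (1 : ℂ) - q ^ (j+1) ≠ 0 := by
    intro h
    exact hprim (j+1) (by omega) h1 (sub_eq_zero.mp h).symm
  exact (mul_eq_zero.mp hL).resolve_left hne

lemma qb_expand {A : Type*} [Ring A] [Algebra ℂ A] (q : ℂ) (a b : A)
    (hcomm : b * a = q • (a * b)) (m : ℕ) :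
    (a + b) ^ m = ∑ k ∈ Finset.range (m+1), qb q m k • (a ^ (m-k) * b ^ k) := by
  have hpowc : ∀ k : ℕ, b ^ k * a = q ^ k • (a * b ^ k) := by
    intro k
    induction k with
    | zero => simp
    | succ k ih =>
      calc b ^ (k+1) * a = b ^ k * (b * a) := by rw [pow_succ, mul_assoc]
        _ = b ^ k * (q • (a * b)) := by rw [hcomm]
        _ = q • (b ^ k * a * b) := by rw [mul_smul_comm, mul_assoc]
        _ = q • ((q ^ k • (a * b ^ k)) * b) := by rw [ih]
        _ = q ^ (k+1) • (a * b ^ (k+1)) := by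
            rw [smul_mul_assoc, smul_smul, ← pow_succ', pow_succ b, ← mul_assoc]
  induction m with
  | zero => simp [qb]
  | succ m ih =>
    have step : ∀ k ∈ Finset.range (m+1),
        (qb q m k • (a ^ (m-k) * b ^ k)) * (a + b)
          = (q ^ k * qb q m k) • (a ^ (m+1-k) * b ^ k)
            + qb q m k • (a ^ (m+1-(k+1)) * b ^ (k+1)) := by
      intro k hk
      have hk' : k ≤ m := by simpa [Nat.lt_succ_iff] using hk
      have e1 : m + 1 - k = (m - k) + 1 := by omega
      have e2 : m + 1 - (k+1) = m - k := by omega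
      have h1 : (a ^ (m-k) * b ^ k) * a = q ^ k • (a ^ (m+1-k) * b ^ k) := by
        rw [e1, mul_assoc, hpowc k, mul_smul_comm, ← mul_assoc, ← pow_succ]
      have h2 : (a ^ (m-k) * b ^ k) * b = a ^ (m+1-(k+1)) * b ^ (k+1) := by
        rw [e2, mul_assoc, ← pow_succ]
      rw [mul_add, smul_mul_assoc, smul_mul_assoc, h1, h2, smul_smul,
        mul_comm (qb q m k) (q ^ k)]
    calc (a + b) ^ (m+1)
        = (∑ k ∈ Finset.range (m+1), qb q m k • (a ^ (m-k) * b ^ k)) * (a + b) := by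
          rw [pow_succ, ih]
      _ = ∑ k ∈ Finset.range (m+1),
            ((q ^ k * qb q m k) • (a ^ (m+1-k) * b ^ k)
              + qb q m k • (a ^ (m+1-(k+1)) * b ^ (k+1))) := by
          rw [Finset.sum_mul]; exact Finset.sum_congr rfl step
      _ = (∑ k ∈ Finset.range (m+1), (q ^ k * qb q m k) • (a ^ (m+1-k) * b ^ k))
            + ∑ k ∈ Finset.range (m+1), qb q m k • (a ^ (m+1-(k+1)) * b ^ (k+1)) :=
          Finset.sum_add_distrib
      _ = ∑ k ∈ Finset.range (m+2), qb q (m+1) k • (a ^ (m+1-k) * b ^ k) := by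
          rw [Finset.sum_range_succ' (fun k => qb q (m+1) k • (a ^ (m+1-k) * b ^ k)) (m+1),
            Finset.sum_range_succ' (fun k => (q ^ k * qb q m k) • (a ^ (m+1-k) * b ^ k)) m]
          have : ∀ k, qb q (m+1) (k+1) • (a ^ (m+1-(k+1)) * b ^ (k+1))
              = (q ^ (k+1) * qb q m (k+1)) • (a ^ (m+1-(k+1)) * b ^ (k+1))
                + qb q m k • (a ^ (m+1-(k+1)) * b ^ (k+1)) := by
            intro k
            rw [← add_smul]
            rfl
          simp only [this, Finset.sum_add_distrib]
          rw [Finset.sum_range_succ (fun k => (q ^ (k+1) * qb q m (k+1)) • (a ^ (m+1-(k+1)) * b ^ (k+1))) m]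
          simp only [qb_of_lt q (Nat.lt_succ_self m), mul_zero, zero_smul, add_zero,
            pow_zero, one_mul, qb_zero, one_smul]
          abel

/-- The q-analogue of the freshman's dream: if `b a = q' a b` in a unital complex
algebra, with `q'` a primitive `n'`-th root of unity, `n' > 1`, then
`(a + b)^{n'} = a^{n'} + b^{n'}`. -/
theorem add_pow_of_q_commute {A : Type*} [Ring A] [Algebra ℂ A]
    (n' : ℕ) (hn' : 1 < n') (q' : ℂ) (hq : q' ^ n' = 1)
    (hprim : ∀ k, 0 < k → k < n' → q' ^ k ≠ 1)
    (a b : A) (hcomm : b * a = q' • (a * b)) :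
    (a + b) ^ n' = a ^ n' + b ^ n' := by
  rw [qb_expand q' a b hcomm n', Finset.sum_range_succ]
  have hmid : ∑ k ∈ Finset.range n', qb q' n' k • (a ^ (n'-k) * b ^ k)
      = a ^ n' := by
    rw [Finset.sum_eq_single 0]
    · simp [qb_zero]
    · intro k hk hk0
      rw [qb_vanish n' q' hq hprim (by omega) (Finset.mem_range.mp hk), zero_smul]
    · intro h
      exact absurd (Finset.mem_range.mpr (by omega)) h
  rw [hmid, qb_diag, Nat.sub_self, pow_zero, one_mul, one_smul]
end

section
/- Let n be a natural number and let μ: ℂ[X] → ℂ be a unital linear functional with μ(X^k) = 0 unless n divides k. Then for any parameter q ∈ ℂ, the q-cumulants α_k^{(q)} of μ, defined recursively by μ(X^k) = Σ_{P ∈ 𝒫[k]} q^{c_0(P)} ∏_{B block of P} α_{|B|}^{(q)} for k ≥ 1, also satisfy α_k^{(q)} = 0 unless n divides k. -/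
open Finset

noncomputable instance {α : Type*} [Fintype α] [DecidableEq α] (s : Finset α) :
    Fintype (Finpartition s) :=
  Fintype.ofInjective Finpartition.parts fun a b h => by cases a; cases b; simpa using h

/-- If the moments `μ(Xᵏ)` vanish unless `n ∣ k`, then the `q`-cumulants `α_k`, defined by
the recursion `μ(Xᵏ) = Σ_{P ∈ 𝒫[k]} q^{c₀(P)} Π_{B ∈ P} α_{|B|}`, also vanish unless
`n ∣ k`. -/
theorem q_cumulants_vanish (n : ℕ) (μ : ℕ → ℂ) (hμ0 : μ 0 = 1)
    (hμ : ∀ k, 1 ≤ k → ¬ n ∣ k → μ k = 0)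
    (q : ℂ) (α : ℕ → ℂ)
    (hrec : ∀ k, 1 ≤ k → μ k =
      ∑ P : Finpartition (univ : Finset (Fin k)),
        q ^ c0 P * ∏ B ∈ P.parts, α B.card) :
    ∀ k, 1 ≤ k → ¬ n ∣ k → α k = 0 := by
  intro k
  induction k using Nat.strong_induction_on with
  | _ k ih =>
  intro hk hnk
  have hinst : Nonempty (Fin k) := Fin.pos_iff_nonempty.mp (by omega)
  have hne : (univ : Finset (Fin k)) ≠ ⊥ := by
    simpa [Finset.bot_eq_empty, ← Finset.nonempty_iff_ne_empty] using
      (Finset.univ_nonempty : (univ : Finset (Fin k)).Nonempty)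
  set P1 : Finpartition (univ : Finset (Fin k)) := Finpartition.indiscrete hne with hP1
  have hparts1 : P1.parts = {univ} := rfl
  have hpinj : Function.Injective
      (Finpartition.parts : Finpartition (univ : Finset (Fin k)) → _) := by
    intro a b h; cases a; cases b; simpa using h
  have hc0 : c0 P1 = 0 := by
    unfold c0
    convert Set.ncard_empty (Fin k × Fin k × Fin k × Fin k)
    ext t
    simp only [Set.mem_setOf_eq, Set.mem_empty_iff_false, iff_false, not_and]
    rintro _ _ _ ⟨A, hA, B, hB, hAB, _⟩
    rw [hparts1, Finset.mem_singleton] at hA hB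
    exact hAB (hA.trans hB.symm)
  have h0 := hrec k hk
  rw [hμ k hk hnk] at h0
  rw [← Finset.add_sum_erase _ _ (Finset.mem_univ P1)] at h0
  have hrest : ∀ P ∈ (Finset.univ : Finset (Finpartition (univ : Finset (Fin k)))).erase P1,
      q ^ c0 P * ∏ B ∈ P.parts, α B.card = 0 := by
    intro P hP
    have hPne : P ≠ P1 := (Finset.mem_erase.mp hP).1
    have hex : ∃ B ∈ P.parts, ¬ n ∣ B.card := by
      by_contra h
      push_neg at h
      apply hnk
      have hsum := P.sum_card_parts
      rw [Finset.card_univ, Fintype.card_fin] at hsum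
      exact hsum ▸ Finset.dvd_sum h
    obtain ⟨B, hB, hBn⟩ := hex
    have hB1 : 1 ≤ B.card := (P.nonempty_of_mem_parts hB).card_pos
    have hBle : B.card ≤ k := by
      simpa using Finset.card_le_card (Finset.subset_univ B)
    have hBlt : B.card < k := by
      rcases lt_or_eq_of_le hBle with h | h
      · exact h
      · exfalso
        have hBuniv : B = univ := by
          apply Finset.eq_univ_of_card
          simpa [Fintype.card_fin] using h
        apply hPne
        apply hpinj
        rw [hparts1]
        apply Finset.eq_singleton_iff_unique_mem.mpr
        refine ⟨hBuniv ▸ hB, ?_⟩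
        intro C hC
        by_contra hCne
        have hdisj := P.disjoint hC (hBuniv ▸ hB) hCne
        have := (P.nonempty_of_mem_parts hC)
        obtain ⟨x, hx⟩ := this
        exact (Finset.disjoint_left.mp hdisj hx) (Finset.mem_univ x)
    have : α B.card = 0 := ih B.card hBlt hB1 hBn
    rw [Finset.prod_eq_zero hB this, mul_zero]
  rw [Finset.sum_eq_zero hrest, add_zero, hc0, pow_zero, one_mul, hparts1] at h0
  rw [Finset.prod_singleton, Finset.card_univ, Fintype.card_fin] at h0
  exact h0.symm
end
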